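/- arXiv:0907.0226 — 2 statements merged into one kernel-verified Lean document; each statement's English description precedes it below -/
import Mathlib

section
/- Let τ ≥ 1 be an integer, u₁, u₂ ∈ ℝ, and α, β real numbers with α > β and 1 ± (α + β) > 0. Define G(x,y) = ((y−x)^{τ−1}/(τ−1)!) e^{(x−y)/2} 1_{[x<y]} and H(x,y) = ((x−y)^{τ−1}/(τ−1)!) e^{−(x−y)/2} 1_{[x>y]}. Then the kernels A(x,y) = 1_{[x≥u₁]} e^{−αx} G(x,y) e^{(α+β)y/2} and B(x,y) = e^{−(α+β)x/2} H(x,y) e^{βy} 1_{[y≥u₂]} are both Hilbert–Schmidt on L²(ℝ), i.e., ∫∫ |A(x,y)|² dx dy < ∞ and ∫∫ |B(x,y)|² dx dy < ∞. -/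
open MeasureTheory Set

/-- The kernel `G(x,y) = ((y−x)^{τ−1}/(τ−1)!) e^{(x−y)/2} 1_{[x<y]}`. -/
noncomputable def Gker (τ : ℕ) (x y : ℝ) : ℝ :=
  if x < y then (y - x) ^ (τ - 1) / (Nat.factorial (τ - 1)) * Real.exp ((x - y) / 2) else 0

/-- The kernel `H(x,y) = ((x−y)^{τ−1}/(τ−1)!) e^{−(x−y)/2} 1_{[x>y]}`. -/
noncomputable def Hker (τ : ℕ) (x y : ℝ) : ℝ :=
  if y < x then (x - y) ^ (τ - 1) / (Nat.factorial (τ - 1)) * Real.exp (-(x - y) / 2) else 0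

lemma aux_f {a : ℝ} (u : ℝ) (ha : 0 < a) :
    Integrable ((Ici u).indicator (fun x => Real.exp (-a * x))) := by
  rw [integrable_indicator_iff measurableSet_Ici]
  exact Iff.mpr integrableOn_Ici_iff_integrableOn_Ioi (exp_neg_integrableOn_Ioi u ha)

lemma aux_g {b : ℝ} (n : ℕ) (hb : 0 < b) :
    Integrable ((Ioi (0:ℝ)).indicator (fun s => s ^ n * Real.exp (-b * s))) := by
  rw [integrable_indicator_iff measurableSet_Ioi]
  have h := integrableOn_rpow_mul_exp_neg_mul_rpow (p := 1) (s := n) (b := b)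
    (lt_of_lt_of_le neg_one_lt_zero (Nat.cast_nonneg n)) zero_lt_one hb
  refine h.congr_fun (fun x hx => ?_) measurableSet_Ioi
  beta_reduce
  rw [Real.rpow_natCast, Real.rpow_one]

lemma key {a b : ℝ} (u : ℝ) (n : ℕ) (ha : 0 < a) (hb : 0 < b) :
    Integrable (fun p : ℝ × ℝ =>
      (Ici u).indicator (fun x => Real.exp (-a * x)) p.1 *
      (Ioi (0:ℝ)).indicator (fun s => s ^ n * Real.exp (-b * s)) (p.2 - p.1)) := by
  have h := (aux_f u ha).mul_prod (aux_g n hb)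
  have hmp : MeasurePreserving (fun z : ℝ × ℝ => (z.1, z.2 - z.1))
      ((volume : Measure ℝ).prod volume) ((volume : Measure ℝ).prod volume) :=
    measurePreserving_prod_sub volume volume
  have h2 := (hmp.integrable_comp h.aestronglyMeasurable).mpr h
  rw [Measure.volume_eq_prod]
  exact h2

lemma key_swap {a b : ℝ} (u : ℝ) (n : ℕ) (ha : 0 < a) (hb : 0 < b) :
    Integrable (fun p : ℝ × ℝ =>
      (Ici u).indicator (fun x => Real.exp (-a * x)) p.2 *
      (Ioi (0:ℝ)).indicator (fun s => s ^ n * Real.exp (-b * s)) (p.1 - p.2)) := by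
  have h := key u n ha hb
  rw [Measure.volume_eq_prod] at h ⊢
  have hmp : MeasurePreserving (Prod.swap : ℝ × ℝ → ℝ × ℝ)
      ((volume : Measure ℝ).prod volume) ((volume : Measure ℝ).prod volume) :=
    Measure.measurePreserving_swap
  exact (hmp.integrable_comp h.aestronglyMeasurable).mpr h

/-- The projected and conjugated kernels
`A(x,y) = 1_{[x≥u₁]} e^{−αx} G(x,y) e^{(α+β)y/2}` and
`B(x,y) = e^{−(α+β)x/2} H(x,y) e^{βy} 1_{[y≥u₂]}` are Hilbert–Schmidt:
their squares are integrable on `ℝ²`. -/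
theorem stmt9 (τ : ℕ) (hτ : 1 ≤ τ) (u₁ u₂ α β : ℝ) (hαβ : β < α)
    (h₁ : 0 < 1 + (α + β)) (h₂ : 0 < 1 - (α + β)) :
    Integrable (fun p : ℝ × ℝ =>
      ((if u₁ ≤ p.1 then (1:ℝ) else 0) * Real.exp (-α * p.1) * Gker τ p.1 p.2 *
        Real.exp ((α + β) * p.2 / 2)) ^ 2) ∧
    Integrable (fun p : ℝ × ℝ =>
      (Real.exp (-(α + β) * p.1 / 2) * Hker τ p.1 p.2 * Real.exp (β * p.2) *
        (if u₂ ≤ p.2 then (1:ℝ) else 0)) ^ 2) := by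
  have hfac : ((Nat.factorial (τ - 1) : ℝ)) ≠ 0 := by
    exact_mod_cast Nat.factorial_ne_zero _
  constructor
  · have h := (key (a := α - β) (b := 1 - (α + β)) u₁ ((τ - 1) * 2)
      (by linarith) h₂).const_mul ((1:ℝ) / ((Nat.factorial (τ - 1) : ℝ)) ^ 2)
    refine h.congr (Filter.Eventually.of_forall fun p => ?_)
    obtain ⟨x, y⟩ := p
    simp only [indicator_apply, mem_Ici, mem_Ioi, sub_pos, Gker]
    by_cases hxy : x < y <;> by_cases hu : u₁ ≤ x <;>
      simp [hxy, hu]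
    rw [pow_mul]
    have hA : Real.exp ((β - α) * x) * Real.exp ((α + β - 1) * (y - x)) =
        (Real.exp (-(α * x)) * Real.exp ((x - y) / 2) *
          Real.exp ((α + β) * y / 2)) ^ 2 := by
      rw [← Real.exp_add, ← Real.exp_add, sq, ← Real.exp_add, ← Real.exp_add]
      congr 1; ring
    linear_combination ((y - x) ^ (τ - 1)) ^ 2 / ((Nat.factorial (τ - 1) : ℝ)) ^ 2 * hA
  · have h := (key_swap (a := α - β) (b := 1 + (α + β)) u₂ ((τ - 1) * 2)
      (by linarith) h₁).const_mul ((1:ℝ) / ((Nat.factorial (τ - 1) : ℝ)) ^ 2)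
    refine h.congr (Filter.Eventually.of_forall fun p => ?_)
    obtain ⟨x, y⟩ := p
    simp only [indicator_apply, mem_Ici, mem_Ioi, sub_pos, Hker]
    by_cases hxy : y < x <;> by_cases hu : u₂ ≤ y <;>
      simp [hxy, hu]
    rw [pow_mul]
    have hA : Real.exp ((β - α) * y) * Real.exp ((-β - α - 1) * (x - y)) =
        (Real.exp ((-β - α) * x / 2) * Real.exp ((y - x) / 2) *
          Real.exp (β * y)) ^ 2 := by
      rw [← Real.exp_add, ← Real.exp_add, sq, ← Real.exp_add, ← Real.exp_add]
      congr 1; ring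
    linear_combination ((x - y) ^ (τ - 1)) ^ 2 / ((Nat.factorial (τ - 1) : ℝ)) ^ 2 * hA
end

section
/- Let ρ ∈ (0,1) and let h₀ be as in the steepest-descent phase function, h₀(w) = −w + ρ² log(1/2 + w) − (1−ρ)² log(1/2 − w). Along the ray γ₁ = { w = ρ − 1/2 + e^{−iπ/3} t : t ∈ [0, 2(1−ρ)] }, the derivative of Re(h₀(w)) with respect to t equals − t²(2ρ(1−ρ) + (1−2ρ)t + t²) / (2 |1/2 − w|² |1/2 + w|²), and the quadratic 2ρ(1−ρ) + (1−2ρ)t + t² is strictly positive for all ρ ∈ (0,1) and t ∈ [0, 2(1−ρ)]; hence Re(h₀) is non-increasing along γ₁ (strictly decreasing for t > 0). -/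
open Complex in
set_option maxHeartbeats 1000000 in
private lemma stmt19_aux (ρ t : ℝ) (e a b : ℂ) (s : ℝ) (hs2 : s^2 = 3)
    (hea : e.re = 1/2) (hei : e.im = -(s/2))
    (har : a.re = ρ + t/2) (hai : a.im = -(s/2)*t)
    (hbr : b.re = 1 - ρ - t/2) (hbi : b.im = (s/2)*t)
    (ha0 : a ≠ 0) (hb0 : b ≠ 0) :
    (e * (-1 + (ρ:ℂ)^2 * a⁻¹ + ((1:ℂ) - ρ)^2 * b⁻¹)).re
      = -(t^2 * (2 * ρ * (1 - ρ) + (1 - 2 * ρ) * t + t ^ 2)) /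
        (2 * ‖b‖ ^ 2 * ‖a‖ ^ 2) := by
  have hnA : normSq a = ρ^2 + ρ*t + t^2 := by
    rw [Complex.normSq_apply, har, hai]; linear_combination (t^2/4) * hs2
  have hnB : normSq b = (1-ρ)^2 - (1-ρ)*t + t^2 := by
    rw [Complex.normSq_apply, hbr, hbi]; linear_combination (t^2/4) * hs2
  have hA : (0:ℝ) < ρ^2 + ρ*t + t^2 := hnA ▸ normSq_pos.2 ha0
  have hB : (0:ℝ) < (1-ρ)^2 - (1-ρ)*t + t^2 := hnB ▸ normSq_pos.2 hb0
  rw [Complex.sq_norm, Complex.sq_norm]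
  rw [show ((1:ℂ) - ρ) = ((1 - ρ : ℝ) : ℂ) by push_cast; ring,
    show ((ρ:ℂ)^2) = ((ρ^2 : ℝ) : ℂ) by push_cast; ring,
    show (((1 - ρ : ℝ) : ℂ)^2) = (((1-ρ)^2 : ℝ) : ℂ) by push_cast; ring]
  rw [Complex.mul_re, Complex.add_re, Complex.add_im, Complex.add_re, Complex.add_im,
    Complex.mul_re, Complex.mul_im, Complex.mul_re, Complex.mul_im,
    Complex.inv_re, Complex.inv_im, Complex.inv_re, Complex.inv_im]
  simp only [hea, hei, har, hai, hbr, hbi, hnA, hnB, Complex.neg_re, Complex.neg_im,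
    Complex.one_re, Complex.one_im, Complex.ofReal_re, Complex.ofReal_im]
  have hA2 : ρ * (ρ + t) + t ^ 2 ≠ 0 := (by nlinarith : (0:ℝ) < ρ * (ρ + t) + t ^ 2).ne'
  have hB2 : (1 - ρ) * (1 - ρ - t) + t ^ 2 ≠ 0 := (by nlinarith : (0:ℝ) < (1 - ρ) * (1 - ρ - t) + t ^ 2).ne'
  field_simp
  ring_nf
  simp only [hs2]
  ring

/-- Along the ray `γ₁ = {ρ − 1/2 + e^{−iπ/3} t : t ∈ [0, 2(1−ρ)]}`, the derivative of
`Re h₀` equals `−t² q(t)/(2|1/2 − w|²|1/2 + w|²)` where the quadratic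
`q(t) = 2ρ(1−ρ) + (1−2ρ)t + t²` is strictly positive; hence `Re h₀` is non-increasing
along `γ₁`. -/
theorem stmt19 (ρ : ℝ) (hρ : ρ ∈ Set.Ioo (0:ℝ) 1) :
    let h₀ : ℂ → ℂ := fun w =>
      -w + (ρ : ℂ) ^ 2 * Complex.log (1 / 2 + w) - ((1 : ℂ) - ρ) ^ 2 * Complex.log (1 / 2 - w)
    let γ : ℝ → ℂ := fun t =>
      ((ρ : ℂ) - 1 / 2) + Complex.exp (-(Real.pi / 3 : ℝ) * Complex.I) * t
    let q : ℝ → ℝ := fun t => 2 * ρ * (1 - ρ) + (1 - 2 * ρ) * t + t ^ 2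
    (∀ t ∈ Set.Icc (0:ℝ) (2 * (1 - ρ)),
      HasDerivAt (fun u : ℝ => (h₀ (γ u)).re)
        (-(t ^ 2 * q t) /
          (2 * ‖(1 / 2 - γ t : ℂ)‖ ^ 2 * ‖(1 / 2 + γ t : ℂ)‖ ^ 2)) t ∧
      0 < q t) ∧
    AntitoneOn (fun t : ℝ => (h₀ (γ t)).re) (Set.Icc (0:ℝ) (2 * (1 - ρ))) := by
  obtain ⟨hρ0, hρ1⟩ := hρ
  intro h₀ γ q
  set s : ℝ := Real.sqrt 3 with hs_def
  have hs2 : s ^ 2 = 3 := Real.sq_sqrt (by norm_num)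
  have hs0 : (0:ℝ) < s := Real.sqrt_pos.2 (by norm_num)
  set e : ℂ := Complex.exp (-(Real.pi / 3 : ℝ) * Complex.I) with he_def
  have harg : (-(Real.pi / 3 : ℝ) * Complex.I : ℂ) = ((-(Real.pi/3) : ℝ) : ℂ) * Complex.I := by
    push_cast; ring
  have he_re : e.re = 1/2 := by
    rw [he_def, harg, Complex.exp_ofReal_mul_I_re, Real.cos_neg, Real.cos_pi_div_three]
  have he_im : e.im = -(s/2) := by
    rw [he_def, harg, Complex.exp_ofReal_mul_I_im, Real.sin_neg, Real.sin_pi_div_three]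
  have hγre : ∀ t : ℝ, (γ t).re = ρ - 1/2 + t/2 := by
    intro t
    show ((ρ : ℂ) - 1 / 2 + e * t).re = _
    rw [Complex.add_re, Complex.mul_re, he_re, he_im, Complex.sub_re, Complex.ofReal_re,
      Complex.ofReal_im]
    norm_num; ring
  have hγim : ∀ t : ℝ, (γ t).im = -(s/2) * t := by
    intro t
    show ((ρ : ℂ) - 1 / 2 + e * t).im = _
    rw [Complex.add_im, Complex.mul_im, he_re, he_im, Complex.sub_im, Complex.ofReal_re,
      Complex.ofReal_im]
    norm_num
  have har : ∀ t : ℝ, ((1:ℂ)/2 + γ t).re = ρ + t/2 := by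
    intro t; rw [Complex.add_re, hγre t]; norm_num; ring
  have hai : ∀ t : ℝ, ((1:ℂ)/2 + γ t).im = -(s/2)*t := by
    intro t; rw [Complex.add_im, hγim t]; norm_num
  have hbr : ∀ t : ℝ, ((1:ℂ)/2 - γ t).re = 1 - ρ - t/2 := by
    intro t; rw [Complex.sub_re, hγre t]; norm_num; ring
  have hbi : ∀ t : ℝ, ((1:ℂ)/2 - γ t).im = (s/2)*t := by
    intro t; rw [Complex.sub_im, hγim t]; norm_num
  -- slit plane membership
  have ha_slit : ∀ t ∈ Set.Icc (0:ℝ) (2 * (1 - ρ)), ((1:ℂ)/2 + γ t) ∈ Complex.slitPlane := by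
    intro t ht
    exact Complex.mem_slitPlane_iff.2 (Or.inl (by rw [har t]; nlinarith [ht.1]))
  have hb_slit : ∀ t ∈ Set.Icc (0:ℝ) (2 * (1 - ρ)), ((1:ℂ)/2 - γ t) ∈ Complex.slitPlane := by
    intro t ht
    rcases eq_or_lt_of_le ht.1 with h0 | h0
    · exact Complex.mem_slitPlane_iff.2 (Or.inl (by rw [hbr t, ← h0]; nlinarith))
    · exact Complex.mem_slitPlane_iff.2 (Or.inr (by rw [hbi t]; positivity))
  -- derivative of γ
  have hγd : ∀ t : ℝ, HasDerivAt γ e t := by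
    intro t
    have h1 : HasDerivAt (fun u : ℝ => ((u:ℝ) : ℂ)) 1 t := by
      simpa using (hasDerivAt_id t).ofReal_comp
    have := (h1.const_mul e).const_add ((ρ : ℂ) - 1/2)
    simpa only [mul_one] using this
  -- key derivative fact
  have key : ∀ t ∈ Set.Icc (0:ℝ) (2 * (1 - ρ)),
      HasDerivAt (fun u : ℝ => (h₀ (γ u)).re)
        (-(t ^ 2 * q t) /
          (2 * ‖(1 / 2 - γ t : ℂ)‖ ^ 2 * ‖(1 / 2 + γ t : ℂ)‖ ^ 2)) t := by
    intro t ht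
    have ha := ha_slit t ht
    have hb := hb_slit t ht
    have ha0 : ((1:ℂ)/2 + γ t) ≠ 0 := Complex.slitPlane_ne_zero ha
    have hb0 : ((1:ℂ)/2 - γ t) ≠ 0 := Complex.slitPlane_ne_zero hb
    set w : ℂ := γ t with hw
    have h1 : HasDerivAt (fun z : ℂ => Complex.log (1/2 + z)) ((1/2 + w)⁻¹) w := by
      simpa [Function.comp_def] using (Complex.hasDerivAt_log ha).comp w ((hasDerivAt_id w).const_add ((1:ℂ)/2))
    have h2 : HasDerivAt (fun z : ℂ => Complex.log (1/2 - z)) (-(1/2 - w)⁻¹) w := by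
      simpa [Function.comp_def] using (Complex.hasDerivAt_log hb).comp w ((hasDerivAt_id w).const_sub ((1:ℂ)/2))
    have hh : HasDerivAt h₀ (-1 + (ρ:ℂ)^2 * (1/2 + w)⁻¹ + ((1:ℂ) - ρ)^2 * (1/2 - w)⁻¹) w := by
      have := ((hasDerivAt_id w).neg.add (h1.const_mul ((ρ:ℂ)^2))).sub
        (h2.const_mul (((1:ℂ) - ρ)^2))
      refine this.congr_deriv ?_
      ring
    have H : HasDerivAt (fun u : ℝ => h₀ (γ u))
        (e * (-1 + (ρ:ℂ)^2 * (1/2 + w)⁻¹ + ((1:ℂ) - ρ)^2 * (1/2 - w)⁻¹)) t := by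
      have := (hh.hasFDerivAt.restrictScalars ℝ).comp_hasDerivAt t (hγd t)
      simpa [mul_comm, Function.comp_def] using this
    have Hre : HasDerivAt (fun u : ℝ => (h₀ (γ u)).re)
        ((e * (-1 + (ρ:ℂ)^2 * (1/2 + w)⁻¹ + ((1:ℂ) - ρ)^2 * (1/2 - w)⁻¹)).re) t :=
      Complex.reCLM.hasFDerivAt.comp_hasDerivAt t H
    have hval := stmt19_aux ρ t e (1/2 + w) (1/2 - w) s hs2 he_re he_im
      (har t) (hai t) (hbr t) (hbi t) ha0 hb0
    rw [hval] at Hre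
    exact Hre
  have qpos : ∀ t ∈ Set.Icc (0:ℝ) (2 * (1 - ρ)), 0 < q t := by
    intro t ht
    obtain ⟨ht0, ht2⟩ := ht
    show (0:ℝ) < 2 * ρ * (1 - ρ) + (1 - 2 * ρ) * t + t ^ 2
    rcases eq_or_lt_of_le ht0 with h0 | h0
    · rw [← h0]; nlinarith
    · nlinarith [mul_nonneg (by linarith : (0:ℝ) ≤ 2*(1-ρ) - t) (by nlinarith : (0:ℝ) ≤ 2*ρ + t),
        mul_pos h0 h0]
  refine ⟨fun t ht => ⟨key t ht, qpos t ht⟩, ?_⟩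
  apply antitoneOn_of_deriv_nonpos (convex_Icc _ _)
  · exact fun x hx => (key x hx).continuousAt.continuousWithinAt
  · rw [interior_Icc]
    exact fun x hx => ((key x (Set.Ioo_subset_Icc_self hx)).differentiableAt).differentiableWithinAt
  · rw [interior_Icc]
    intro x hx
    rw [(key x (Set.Ioo_subset_Icc_self hx)).deriv]
    apply div_nonpos_of_nonpos_of_nonneg
    · have := qpos x (Set.Ioo_subset_Icc_self hx)
      nlinarith [sq_nonneg x]
    · positivity
end
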